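/- For any integer N ≥ 2 and complex numbers y_1, ..., y_N and η, the determinant of the N×N matrix A(y,η) — whose first N−1 rows have sin(y_j) in column j, −sin(y_{j+1}) in column j+1, and zeros elsewhere, and whose last row is (cos(y_1), cos(y_2), ..., cos(y_{N−1}), cos(y_N) + η·sin(y_N)) — equals F_N(y) + η·F_D(y), where F_N(y) = ∑_{j=1}^N cos(y_j) ∏_{k≠j} sin(y_k) and F_D(y) = ∏_{j=1}^N sin(y_j). -/

import Mathlib

open Complex Finset

lemma prod_erase_fin {n : ℕ} (g : Fin (n + 1) → ℂ) (p : Fin (n + 1)) :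
    ∏ k ∈ Finset.univ.erase p, g k = ∏ i : Fin n, g (p.succAbove i) := by
  have h := Fin.univ_succAbove n p
  rw [show (Finset.univ.erase p : Finset (Fin (n+1)))
      = Finset.univ.map (Fin.succAboveEmb p) by
    rw [h, Finset.erase_cons], Finset.prod_map]
  rfl

lemma secular_det_aux (n : ℕ) : ∀ (y : Fin (n+1) → ℂ) (η : ℂ)
    (A : Matrix (Fin (n+1)) (Fin (n+1)) ℂ),
    (∀ i j : Fin (n+1), A i j =
      if (i : ℕ) + 1 < n+1 then
        (if j = i then Complex.sin (y i)
         else if (j : ℕ) = (i : ℕ) + 1 then -Complex.sin (y j) else 0)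
      else
        (if (j : ℕ) + 1 = n+1 then Complex.cos (y j) + η * Complex.sin (y j)
         else Complex.cos (y j))) →
    A.det = (∑ j : Fin (n+1), Complex.cos (y j) *
        ∏ k ∈ Finset.univ.erase j, Complex.sin (y k))
      + η * ∏ j : Fin (n+1), Complex.sin (y j) := by
  induction n with
  | zero =>
    intro y η A hA
    rw [Matrix.det_fin_one, hA]
    simp
  | succ n ih =>
    intro y η A hA
    rw [Matrix.det_succ_column_zero]
    -- only i = 0 and i = last contribute
    have hzero : ∀ i : Fin (n+2), i ≠ 0 → i ≠ Fin.last (n+1) → A i 0 = 0 := by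
      intro i hi0 hil
      rw [hA]
      have h1 : (i : ℕ) + 1 < n + 2 := by
        have := Fin.val_lt_last hil
        omega
      have h2 : (0 : Fin (n+2)) ≠ i := fun h => hi0 h.symm
      have h3 : ((0 : Fin (n+2)) : ℕ) ≠ (i : ℕ) + 1 := by simp
      simp [h1, h2, h3]
    have hsum : (∑ i : Fin (n+2), (-1) ^ (i : ℕ) * A i 0 *
          (A.submatrix i.succAbove Fin.succ).det)
        = (-1) ^ ((0 : Fin (n+2)) : ℕ) * A 0 0 *
            (A.submatrix (Fin.succAbove 0) Fin.succ).det
          + (-1) ^ ((Fin.last (n+1) : Fin (n+2)) : ℕ) * A (Fin.last (n+1)) 0 *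
            (A.submatrix (Fin.last (n+1)).succAbove Fin.succ).det := by
      refine Finset.sum_eq_add_of_mem _ _ (Finset.mem_univ _) (Finset.mem_univ _)
        (by simp [Fin.ext_iff]) ?_
      intro c _ hc
      rw [hzero c hc.1 hc.2, mul_zero, zero_mul]
    rw [hsum]
    -- entries
    have hA00 : A 0 0 = Complex.sin (y 0) := by rw [hA]; simp
    have hAl0 : A (Fin.last (n+1)) 0 = Complex.cos (y 0) := by
      rw [hA]; simp [Fin.last]
    -- first minor satisfies the hypothesis at level n
    have hC : (A.submatrix (Fin.succAbove 0) Fin.succ).det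
        = (∑ j : Fin (n+1), Complex.cos (y j.succ) *
            ∏ k ∈ Finset.univ.erase j, Complex.sin (y k.succ))
          + η * ∏ j : Fin (n+1), Complex.sin (y j.succ) := by
      refine ih (fun j => y j.succ) η _ ?_
      intro i j
      simp only [Matrix.submatrix_apply, Fin.succAbove_zero]
      rw [hA]
      have e1 : ((i.succ : Fin (n+2)) : ℕ) + 1 < n + 2 ↔ (i : ℕ) + 1 < n + 1 := by
        simp only [Fin.val_succ]; omega
      have e2 : (j.succ = i.succ) ↔ j = i := Fin.succ_inj
      have e3 : ((j.succ : Fin (n+2)) : ℕ) = ((i.succ : Fin (n+2)) : ℕ) + 1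
          ↔ (j : ℕ) = (i : ℕ) + 1 := by simp only [Fin.val_succ]; omega
      have e4 : ((j.succ : Fin (n+2)) : ℕ) + 1 = n + 2 ↔ (j : ℕ) + 1 = n + 1 := by
        simp only [Fin.val_succ]; omega
      simp only [e1, e2, e3, e4]
    -- second minor is lower triangular
    have hB : (A.submatrix (Fin.last (n+1)).succAbove Fin.succ).det
        = (-1) ^ (n+1) * ∏ j : Fin (n+1), Complex.sin (y j.succ) := by
      have hBdiag : ∀ k : Fin (n+1),
          (A.submatrix (Fin.last (n+1)).succAbove Fin.succ) k k
            = -Complex.sin (y k.succ) := by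
        intro k
        simp only [Matrix.submatrix_apply, Fin.succAbove_last]
        rw [hA]
        have h1 : ((k.castSucc : Fin (n+2)) : ℕ) + 1 < n + 2 := by
          simp only [Fin.coe_castSucc]; omega
        have h2 : (k.succ : Fin (n+2)) ≠ k.castSucc := by
          simp only [ne_eq, Fin.ext_iff, Fin.val_succ, Fin.coe_castSucc]; omega
        have h3 : ((k.succ : Fin (n+2)) : ℕ) = ((k.castSucc : Fin (n+2)) : ℕ) + 1 := by
          simp only [Fin.val_succ, Fin.coe_castSucc]
        rw [if_pos h1, if_neg h2, if_pos h3]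
      have htri : (A.submatrix (Fin.last (n+1)).succAbove Fin.succ).BlockTriangular
          OrderDual.toDual := by
        intro i j hij
        simp only [OrderDual.toDual_lt_toDual] at hij
        simp only [Matrix.submatrix_apply, Fin.succAbove_last]
        rw [hA]
        have h1 : ((i.castSucc : Fin (n+2)) : ℕ) + 1 < n + 2 := by
          simp only [Fin.coe_castSucc]; omega
        have hlt : (i : ℕ) < (j : ℕ) := hij
        have h2 : (j.succ : Fin (n+2)) ≠ i.castSucc := by
          simp only [ne_eq, Fin.ext_iff, Fin.val_succ, Fin.coe_castSucc]; omega
        have h3 : ((j.succ : Fin (n+2)) : ℕ) ≠ ((i.castSucc : Fin (n+2)) : ℕ) + 1 := by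
          simp only [ne_eq, Fin.val_succ, Fin.coe_castSucc]; omega
        rw [if_pos h1, if_neg h2, if_neg h3]
      rw [Matrix.det_of_lowerTriangular _ htri]
      rw [Finset.prod_congr rfl (fun k _ => hBdiag k)]
      rw [show (∏ k : Fin (n+1), -Complex.sin (y k.succ))
          = ∏ k : Fin (n+1), (-1) * Complex.sin (y k.succ) from by simp,
        Finset.prod_mul_distrib, Finset.prod_const]
      simp
    have herase0 : ∏ k ∈ Finset.univ.erase (0 : Fin (n+2)), Complex.sin (y k)
        = ∏ j : Fin (n+1), Complex.sin (y j.succ) := by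
      rw [prod_erase_fin]
      simp [Fin.succAbove_zero]
    have heraseS : ∀ j : Fin (n+1),
        ∏ k ∈ Finset.univ.erase (j.succ : Fin (n+2)), Complex.sin (y k)
          = Complex.sin (y 0) * ∏ k ∈ Finset.univ.erase j, Complex.sin (y k.succ) := by
      intro j
      rw [prod_erase_fin, prod_erase_fin, Fin.prod_univ_succ]
      congr 1
      · exact Finset.prod_congr rfl fun i _ => by rw [Fin.succ_succAbove_succ]
    have hs : (∑ j : Fin (n+1), Complex.cos (y j.succ) *
          ∏ k ∈ Finset.univ.erase (j.succ : Fin (n+2)), Complex.sin (y k))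
        = ∑ j : Fin (n+1), Complex.sin (y 0) * (Complex.cos (y j.succ) *
          ∏ k ∈ Finset.univ.erase j, Complex.sin (y k.succ)) :=
      Finset.sum_congr rfl fun j _ => by rw [heraseS j]; ring
    have hneg : ((-1:ℂ))^(n+1) * (-1)^(n+1) = 1 := by
      rw [← pow_add, show (n+1)+(n+1) = 2*(n+1) from by ring, pow_mul]
      norm_num
    rw [hA00, hAl0, hC, hB]
    rw [Fin.sum_univ_succ
        (f := fun j : Fin (n+2) => Complex.cos (y j) * ∏ k ∈ Finset.univ.erase j, Complex.sin (y k)),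
      Fin.prod_univ_succ (f := fun j : Fin (n+2) => Complex.sin (y j)),
      herase0, hs, ← Finset.mul_sum]
    simp only [Fin.val_zero, pow_zero, one_mul, Fin.val_last]
    have hsgn : (-1:ℂ)^(n+1) * Complex.cos (y 0) *
          ((-1)^(n+1) * ∏ j : Fin (n+1), Complex.sin (y j.succ))
        = Complex.cos (y 0) * ∏ j : Fin (n+1), Complex.sin (y j.succ) := by
      calc (-1:ℂ)^(n+1) * Complex.cos (y 0) *
            ((-1)^(n+1) * ∏ j : Fin (n+1), Complex.sin (y j.succ))
          = ((-1:ℂ)^(n+1) * (-1)^(n+1)) *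
            (Complex.cos (y 0) * ∏ j : Fin (n+1), Complex.sin (y j.succ)) := by ring
        _ = _ := by rw [hneg, one_mul]
    rw [hsgn]
    ring

/-- Determinant of the secular matrix of a quantum star graph:
`det A(y,η) = F_N(y) + η F_D(y)`. -/
theorem secular_det (N : ℕ) (hN : 2 ≤ N) (y : Fin N → ℂ) (η : ℂ)
    (A : Matrix (Fin N) (Fin N) ℂ)
    (hA : ∀ i j : Fin N, A i j =
      if (i : ℕ) + 1 < N then
        (if j = i then Complex.sin (y i)
         else if (j : ℕ) = (i : ℕ) + 1 then -Complex.sin (y j) else 0)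
      else
        (if (j : ℕ) + 1 = N then Complex.cos (y j) + η * Complex.sin (y j)
         else Complex.cos (y j))) :
    A.det = (∑ j : Fin N, Complex.cos (y j) * ∏ k ∈ Finset.univ.erase j, Complex.sin (y k))
      + η * ∏ j : Fin N, Complex.sin (y j) := by
  obtain ⟨n, rfl⟩ : ∃ n, N = n + 1 := ⟨N - 1, by omega⟩
  exact secular_det_aux n y η A hA
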